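/- Let C ≥ 1 and D be natural numbers. Let p : Fin C → ℝ be a probability vector with p_s > 0 for all s, for each s ∈ Fin C let q_s : {0,…,D} → ℝ be a probability vector, and let z : Fin C → Fin C → ℝ be a row-stochastic matrix (z_{sr} ≥ 0 and Σ_r z_{sr} = 1 for each s). On Ω = {n : Fin C → ℕ | Σ_k n_k ≤ D} define for each s the probability mass function P_s(n) = q_s(|n|) · (|n|! / Π_k n_k!) · Π_k z_{sk}^{n_k}, where |n| = Σ_k n_k, and define the mixture m(n) = Σ_{s=1}^{C} p_s P_s(n). Then the Shannon entropy of m satisfies H(m) ≥ Σ_{s=1}^{C} p_s H(P_s) − Σ_{s=1}^{C} p_s ln( Σ_{r=1}^{C} p_r ( Σ_{d=0}^{D} √(q_s(d) q_r(d)) · (Σ_{k=1}^{C} √(z_{sk} z_{rk}))^d ) ). -/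

import Mathlib

open scoped BigOperators

private lemma log_jensen {ι : Type*} (T : Finset ι) (w f : ι → ℝ)
    (hw : ∀ i ∈ T, 0 ≤ w i) (hw1 : ∑ i ∈ T, w i = 1)
    (hf : ∀ i ∈ T, 0 ≤ f i)
    (hpos : ∀ i ∈ T, 0 < w i → 0 < f i)
    (hsum : ∑ i ∈ T, w i * f i ≤ 1) :
    ∑ i ∈ T, w i * Real.log (f i) ≤ 0 := by
  classical
  set S := T.filter (fun i => 0 < w i) with hS
  have hsub : S ⊆ T := Finset.filter_subset _ _
  have h1 : ∑ i ∈ S, w i = ∑ i ∈ T, w i :=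
    Finset.sum_filter_of_ne (fun x hx h => (hw x hx).lt_of_ne (Ne.symm h))
  have h2 : ∑ i ∈ S, w i * f i = ∑ i ∈ T, w i * f i :=
    Finset.sum_filter_of_ne (fun x hx h =>
      (hw x hx).lt_of_ne (fun e => h (by rw [← e, zero_mul])))
  have h3 : ∑ i ∈ T, w i * Real.log (f i) = ∑ i ∈ S, w i * Real.log (f i) :=
    (Finset.sum_filter_of_ne (fun x hx h =>
      (hw x hx).lt_of_ne (fun e => h (by rw [← e, zero_mul])))).symm
  rw [h3]
  have jensen := (strictConcaveOn_log_Ioi.concaveOn).le_map_sum (t := S) (w := w) (p := f)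
    (fun i hi => hw i (hsub hi)) (h1.trans hw1)
    (fun i hi => hpos i (hsub hi) (Finset.mem_filter.mp hi).2)
  simp only [smul_eq_mul] at jensen
  refine jensen.trans (Real.log_nonpos ?_ ?_)
  · exact Finset.sum_nonneg fun i hi => mul_nonneg (hw _ (hsub hi)) (hf _ (hsub hi))
  · rw [h2]; exact hsum

private lemma omega_expand {c D : ℕ} (Ω : Finset (Fin c → ℕ))
    (hΩ : Ω = (Fintype.piFinset fun _ : Fin c => Finset.range (D + 1)).filter
        (fun n => ∑ k, n k ≤ D))
    (Q : ℕ → ℝ) (x : Fin c → ℝ) :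
    ∑ n ∈ Ω, Q (∑ k, n k) * (Nat.multinomial Finset.univ n : ℝ) * ∏ k, x k ^ n k
      = ∑ d ∈ Finset.range (D + 1), Q d * (∑ k, x k) ^ d := by
  classical
  have hΩ' : Ω = (Finset.range (D + 1)).biUnion
      (fun d => Finset.piAntidiag Finset.univ d) := by
    rw [hΩ]; ext n
    simp only [Finset.mem_filter, Fintype.mem_piFinset, Finset.mem_range,
      Finset.mem_biUnion, Finset.mem_piAntidiag, Nat.lt_succ_iff, Finset.mem_univ,
      implies_true, and_true]
    constructor
    · rintro ⟨h1, h2⟩; exact ⟨∑ k, n k, h2, rfl⟩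
    · rintro ⟨d, hd, rfl⟩
      exact ⟨fun k => le_trans (Finset.single_le_sum (f := fun k => n k)
        (fun i _ => Nat.zero_le _) (Finset.mem_univ k)) hd, hd⟩
  have hdisj : (↑(Finset.range (D + 1)) : Set ℕ).PairwiseDisjoint
      (fun d => Finset.piAntidiag (Finset.univ : Finset (Fin c)) d) := by
    intro d1 _ d2 _ hne
    simp only [Function.onFun, Finset.disjoint_left]
    intro n h1 h2
    rw [Finset.mem_piAntidiag] at h1 h2
    exact hne (h1.1 ▸ h2.1 ▸ rfl)
  rw [hΩ', Finset.sum_biUnion hdisj]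
  apply Finset.sum_congr rfl
  intro d hd
  rw [Finset.sum_pow_eq_sum_piAntidiag, Finset.mul_sum]
  apply Finset.sum_congr rfl
  intro n hn
  have hsum : ∑ k, n k = d := ((Finset.mem_piAntidiag).mp hn).1
  rw [hsum]; ring

/-- **Final displayed inequality of Appendix B**: the entropy of the marginal distribution
over neighborhood label configurations (a mixture over labels of degree-weighted multinomials)
is bounded below via the closed-form Bhattacharyya coefficients. -/
theorem mixture_configuration_entropy_lower_bound
    (C D : ℕ) (hC : 1 ≤ C)
    (p : Fin C → ℝ) (hp_pos : ∀ s, 0 < p s) (hp_sum : ∑ s, p s = 1)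
    (q : Fin C → ℕ → ℝ) (hq_nonneg : ∀ s d, 0 ≤ q s d)
    (hq_sum : ∀ s, ∑ d ∈ Finset.range (D + 1), q s d = 1)
    (z : Fin C → Fin C → ℝ) (hz_nonneg : ∀ s r, 0 ≤ z s r)
    (hz_sum : ∀ s, ∑ r, z s r = 1)
    -- the space of neighborhood label configurations of size at most `D`
    (Ω : Finset (Fin C → ℕ))
    (hΩ : Ω = (Fintype.piFinset fun _ : Fin C => Finset.range (D + 1)).filter
        (fun n => ∑ k, n k ≤ D))
    -- the degree-weighted multinomial probability mass function for each label `s`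
    (P : Fin C → (Fin C → ℕ) → ℝ)
    (hP : ∀ s n, P s n =
      q s (∑ k, n k) * (Nat.multinomial Finset.univ n : ℝ) * ∏ k, z s k ^ n k)
    -- the mixture distribution over configurations
    (m : (Fin C → ℕ) → ℝ) (hm : ∀ n, m n = ∑ s, p s * P s n)
    -- Shannon entropy of a probability mass function on `Ω`
    (H : ((Fin C → ℕ) → ℝ) → ℝ)
    (hH : ∀ a : (Fin C → ℕ) → ℝ, H a = -∑ n ∈ Ω, a n * Real.log (a n)) :
    H m ≥ ∑ s, p s * H (P s)
      - ∑ s, p s * Real.log (∑ r, p r *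
          (∑ d ∈ Finset.range (D + 1), Real.sqrt (q s d * q r d) *
            (∑ k, Real.sqrt (z s k * z r k)) ^ d)) := by
  classical
  -- nonnegativity facts
  have hPnn : ∀ s n, 0 ≤ P s n := by
    intro s n; rw [hP]
    have h1 := hq_nonneg s (∑ k, n k)
    have h2 : (0:ℝ) ≤ (Nat.multinomial Finset.univ n : ℝ) := Nat.cast_nonneg _
    have h3 : (0:ℝ) ≤ ∏ k, z s k ^ n k :=
      Finset.prod_nonneg fun k _ => pow_nonneg (hz_nonneg s k) _
    positivity
  have hmnn : ∀ n, 0 ≤ m n := by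
    intro n; rw [hm]
    exact Finset.sum_nonneg fun s _ => mul_nonneg (hp_pos s).le (hPnn s n)
  have hmpos : ∀ s n, 0 < P s n → 0 < m n := by
    intro s n hpPn
    rw [hm]
    exact Finset.sum_pos' (fun r _ => mul_nonneg (hp_pos r).le (hPnn r n))
      ⟨s, Finset.mem_univ s, mul_pos (hp_pos s) hpPn⟩
  -- each `P s` is a probability mass function on `Ω`
  have hPsum : ∀ s, ∑ n ∈ Ω, P s n = 1 := by
    intro s
    have e : ∑ n ∈ Ω, P s n
        = ∑ n ∈ Ω, q s (∑ k, n k) * (Nat.multinomial Finset.univ n : ℝ) * ∏ k, z s k ^ n k :=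
      Finset.sum_congr rfl fun n _ => hP s n
    rw [e, omega_expand Ω hΩ, hz_sum s]
    simp only [one_pow, mul_one]
    exact hq_sum s
  -- pointwise square-root formula
  have sqrtP : ∀ s r n, Real.sqrt (P s n * P r n)
      = Real.sqrt (q s (∑ k, n k) * q r (∑ k, n k)) * (Nat.multinomial Finset.univ n : ℝ)
        * ∏ k, Real.sqrt (z s k * z r k) ^ n k := by
    intro s r n
    have hqn : 0 ≤ q s (∑ k, n k) * q r (∑ k, n k) :=
      mul_nonneg (hq_nonneg _ _) (hq_nonneg _ _)
    have hprod : P s n * P r n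
        = (Real.sqrt (q s (∑ k, n k) * q r (∑ k, n k)) * (Nat.multinomial Finset.univ n : ℝ)
            * ∏ k, Real.sqrt (z s k * z r k) ^ n k)
          * (Real.sqrt (q s (∑ k, n k) * q r (∑ k, n k)) * (Nat.multinomial Finset.univ n : ℝ)
            * ∏ k, Real.sqrt (z s k * z r k) ^ n k) := by
      rw [hP, hP]
      have e2 : (∏ k, Real.sqrt (z s k * z r k) ^ n k) * (∏ k, Real.sqrt (z s k * z r k) ^ n k)
          = ∏ k, (z s k * z r k) ^ n k := by
        rw [← Finset.prod_mul_distrib]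
        exact Finset.prod_congr rfl fun k _ => by
          rw [← mul_pow, Real.mul_self_sqrt (mul_nonneg (hz_nonneg s k) (hz_nonneg r k))]
      have e3 : (∏ k, z s k ^ n k) * (∏ k, z r k ^ n k) = ∏ k, (z s k * z r k) ^ n k := by
        rw [← Finset.prod_mul_distrib]
        exact Finset.prod_congr rfl fun k _ => (mul_pow _ _ _).symm
      have e1 : Real.sqrt (q s (∑ k, n k) * q r (∑ k, n k))
          * Real.sqrt (q s (∑ k, n k) * q r (∑ k, n k)) = q s (∑ k, n k) * q r (∑ k, n k) :=
        Real.mul_self_sqrt hqn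
      calc q s (∑ k, n k) * (Nat.multinomial Finset.univ n : ℝ) * (∏ k, z s k ^ n k)
            * (q r (∑ k, n k) * (Nat.multinomial Finset.univ n : ℝ) * ∏ k, z r k ^ n k)
          = (q s (∑ k, n k) * q r (∑ k, n k))
            * ((Nat.multinomial Finset.univ n : ℝ) * (Nat.multinomial Finset.univ n : ℝ))
            * ((∏ k, z s k ^ n k) * (∏ k, z r k ^ n k)) := by ring
        _ = _ := by
              rw [e3]; symm
              calc (Real.sqrt (q s (∑ k, n k) * q r (∑ k, n k))
                    * (Nat.multinomial Finset.univ n : ℝ) * ∏ k, Real.sqrt (z s k * z r k) ^ n k)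
                  * (Real.sqrt (q s (∑ k, n k) * q r (∑ k, n k))
                    * (Nat.multinomial Finset.univ n : ℝ) * ∏ k, Real.sqrt (z s k * z r k) ^ n k)
                  = (Real.sqrt (q s (∑ k, n k) * q r (∑ k, n k))
                      * Real.sqrt (q s (∑ k, n k) * q r (∑ k, n k)))
                    * ((Nat.multinomial Finset.univ n : ℝ) * (Nat.multinomial Finset.univ n : ℝ))
                    * ((∏ k, Real.sqrt (z s k * z r k) ^ n k)
                      * ∏ k, Real.sqrt (z s k * z r k) ^ n k) := by ring
                _ = _ := by rw [e1, e2]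
    rw [hprod, Real.sqrt_mul_self (by positivity)]
  -- Bhattacharyya coefficients in closed form
  have hBC : ∀ s r, ∑ n ∈ Ω, Real.sqrt (P s n * P r n)
      = ∑ d ∈ Finset.range (D + 1), Real.sqrt (q s d * q r d)
          * (∑ k, Real.sqrt (z s k * z r k)) ^ d := by
    intro s r
    rw [Finset.sum_congr rfl fun n _ => sqrtP s r n]
    exact omega_expand Ω hΩ (fun d => Real.sqrt (q s d * q r d))
      (fun k => Real.sqrt (z s k * z r k))
  have hBCss : ∀ s, ∑ n ∈ Ω, Real.sqrt (P s n * P s n) = 1 := by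
    intro s
    rw [Finset.sum_congr rfl fun n _ => Real.sqrt_mul_self (hPnn s n)]
    exact hPsum s
  -- abbreviations
  obtain ⟨g, hgdef⟩ : ∃ g : (Fin C → ℕ) → ℝ,
      g = fun x => ∑ r, p r * Real.sqrt (P r x) := ⟨_, rfl⟩
  obtain ⟨B, hBdef⟩ : ∃ B : Fin C → ℝ,
      B = fun s => ∑ r, p r * ∑ n ∈ Ω, Real.sqrt (P s n * P r n) := ⟨_, rfl⟩
  have hgx : ∀ x, g x = ∑ r, p r * Real.sqrt (P r x) := fun x => by rw [hgdef]
  have hBs : ∀ s, B s = ∑ r, p r * ∑ n ∈ Ω, Real.sqrt (P s n * P r n) := fun s => by rw [hBdef]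
  have hBpos : ∀ s, 0 < B s := by
    intro s
    have h1 : p s * ∑ n ∈ Ω, Real.sqrt (P s n * P s n)
        ≤ ∑ r, p r * ∑ n ∈ Ω, Real.sqrt (P s n * P r n) :=
      Finset.single_le_sum (f := fun r => p r * ∑ n ∈ Ω, Real.sqrt (P s n * P r n))
        (fun r _ => mul_nonneg (hp_pos r).le
          (Finset.sum_nonneg fun n _ => Real.sqrt_nonneg _)) (Finset.mem_univ s)
    rw [hBCss s, mul_one] at h1
    rw [hBs]
    exact lt_of_lt_of_le (hp_pos s) h1
  have hgnn : ∀ n, 0 ≤ g n := by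
    intro n; rw [hgx]
    exact Finset.sum_nonneg fun r _ => mul_nonneg (hp_pos r).le (Real.sqrt_nonneg _)
  have hgpos : ∀ s n, 0 < P s n → 0 < g n := by
    intro s n hpo
    rw [hgx]
    exact Finset.sum_pos' (fun r _ => mul_nonneg (hp_pos r).le (Real.sqrt_nonneg _))
      ⟨s, Finset.mem_univ s, mul_pos (hp_pos s) (Real.sqrt_pos.mpr hpo)⟩
  have hgB : ∀ s, ∑ n ∈ Ω, Real.sqrt (P s n) * g n = B s := by
    intro s
    rw [hBs]
    calc ∑ n ∈ Ω, Real.sqrt (P s n) * g n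
        = ∑ n ∈ Ω, ∑ r, p r * Real.sqrt (P s n * P r n) := by
          refine Finset.sum_congr rfl fun n _ => ?_
          rw [hgx, Finset.mul_sum]
          refine Finset.sum_congr rfl fun r _ => ?_
          rw [Real.sqrt_mul (hPnn s n)]
          ring
      _ = ∑ r, p r * ∑ n ∈ Ω, Real.sqrt (P s n * P r n) := by
          rw [Finset.sum_comm]
          exact Finset.sum_congr rfl fun r _ => by rw [Finset.mul_sum]
  -- Part A : per-label Jensen step
  have partA : ∀ s, ∑ n ∈ Ω, P s n * Real.log (Real.sqrt (P s n) * g n / (P s n * B s)) ≤ 0 := by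
    intro s
    apply log_jensen Ω (P s) (fun n => Real.sqrt (P s n) * g n / (P s n * B s))
      (fun n _ => hPnn s n) (hPsum s)
    · intro n _
      exact div_nonneg (mul_nonneg (Real.sqrt_nonneg _) (hgnn n))
        (mul_nonneg (hPnn s n) (hBpos s).le)
    · intro n _ hpo
      exact div_pos (mul_pos (Real.sqrt_pos.mpr hpo) (hgpos s n hpo)) (mul_pos hpo (hBpos s))
    · have hterm : ∀ n ∈ Ω, P s n * (Real.sqrt (P s n) * g n / (P s n * B s))
          ≤ Real.sqrt (P s n) * g n / B s := by
        intro n _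
        rcases (hPnn s n).eq_or_lt with h0 | hpo
        · rw [← h0]
          simp
        · apply le_of_eq
          have hP' : P s n ≠ 0 := ne_of_gt hpo
          have hB' : B s ≠ 0 := ne_of_gt (hBpos s)
          field_simp
      calc ∑ n ∈ Ω, P s n * (Real.sqrt (P s n) * g n / (P s n * B s))
          ≤ ∑ n ∈ Ω, Real.sqrt (P s n) * g n / B s := Finset.sum_le_sum hterm
        _ = 1 := by rw [← Finset.sum_div, hgB s, div_self (ne_of_gt (hBpos s))]
  -- Part B : joint Jensen step
  have hmsum : ∑ n ∈ Ω, m n = 1 := by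
    calc ∑ n ∈ Ω, m n = ∑ n ∈ Ω, ∑ s, p s * P s n := Finset.sum_congr rfl fun n _ => hm n
      _ = ∑ s, ∑ n ∈ Ω, p s * P s n := Finset.sum_comm
      _ = ∑ s, p s := by
          refine Finset.sum_congr rfl fun s _ => ?_
          rw [← Finset.mul_sum, hPsum s, mul_one]
      _ = 1 := hp_sum
  have partB : ∑ sn ∈ Finset.univ ×ˢ Ω, (p sn.1 * P sn.1 sn.2)
      * Real.log (m sn.2 / (Real.sqrt (P sn.1 sn.2) * g sn.2)) ≤ 0 := by
    apply log_jensen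
    · rintro ⟨s, n⟩ _
      exact mul_nonneg (hp_pos s).le (hPnn s n)
    · rw [Finset.sum_product]
      calc ∑ s, ∑ n ∈ Ω, p s * P s n = ∑ s : Fin C, p s := by
            refine Finset.sum_congr rfl fun s _ => ?_
            rw [← Finset.mul_sum, hPsum s, mul_one]
        _ = 1 := hp_sum
    · rintro ⟨s, n⟩ _
      exact div_nonneg (hmnn n) (mul_nonneg (Real.sqrt_nonneg _) (hgnn n))
    · rintro ⟨s, n⟩ _ hw
      have hpo : 0 < P s n := by
        rcases (hPnn s n).eq_or_lt with h0 | hpo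
        · rw [← h0, mul_zero] at hw; exact absurd hw (lt_irrefl 0)
        · exact hpo
      exact div_pos (hmpos s n hpo) (mul_pos (Real.sqrt_pos.mpr hpo) (hgpos s n hpo))
    · rw [Finset.sum_product, Finset.sum_comm]
      have hn2 : ∀ n ∈ Ω,
          (∑ s, p s * P s n * (m n / (Real.sqrt (P s n) * g n))) ≤ m n := by
        intro n _
        have e : ∀ s, p s * P s n * (m n / (Real.sqrt (P s n) * g n))
            = p s * Real.sqrt (P s n) * (m n / g n) := by
          intro s
          rcases (hPnn s n).eq_or_lt with h0 | hpo
          · rw [← h0]; simp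
          · have hsq : (0:ℝ) < Real.sqrt (P s n) := Real.sqrt_pos.mpr hpo
            have hgn : 0 < g n := hgpos s n hpo
            rw [show p s * P s n * (m n / (Real.sqrt (P s n) * g n))
                = p s * (P s n / Real.sqrt (P s n)) * (m n / g n) from by
              field_simp
              , Real.div_sqrt]
        rw [Finset.sum_congr rfl fun s _ => e s]
        rcases (hgnn n).eq_or_lt with h0 | hgn
        · rw [show (∑ s, p s * Real.sqrt (P s n) * (m n / g n))
              = ∑ s, p s * Real.sqrt (P s n) * (m n / g n) from rfl, ← h0]
          simp [hmnn n]
        · rw [← Finset.sum_mul, show (∑ s, p s * Real.sqrt (P s n)) = g n from (hgx n).symm,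
            mul_comm, div_mul_cancel₀ _ (ne_of_gt hgn)]
      calc ∑ n ∈ Ω, ∑ s, p s * P s n * (m n / (Real.sqrt (P s n) * g n))
          ≤ ∑ n ∈ Ω, m n := Finset.sum_le_sum hn2
        _ = 1 := hmsum
  -- pointwise decomposition of the integrand
  have pointwise : ∀ s, ∀ n ∈ Ω,
      P s n * Real.log (m n) - P s n * Real.log (P s n) - P s n * Real.log (B s)
      = P s n * Real.log (Real.sqrt (P s n) * g n / (P s n * B s))
        + P s n * Real.log (m n / (Real.sqrt (P s n) * g n)) := by
    intro s n _
    rcases (hPnn s n).eq_or_lt with h0 | hpo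
    · rw [← h0]; ring
    · have hsq : (0:ℝ) < Real.sqrt (P s n) := Real.sqrt_pos.mpr hpo
      have hgn : 0 < g n := hgpos s n hpo
      have hmn : 0 < m n := hmpos s n hpo
      have hB : 0 < B s := hBpos s
      rw [Real.log_div (by positivity) (by positivity),
          Real.log_div (by positivity) (by positivity),
          Real.log_mul (by positivity) (by positivity),
          Real.log_mul (by positivity) (by positivity)]
      ring
  -- the key inequality
  have key : ∑ s, p s * ∑ n ∈ Ω,
      (P s n * Real.log (m n) - P s n * Real.log (P s n) - P s n * Real.log (B s)) ≤ 0 := by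
    have e : ∀ s, ∑ n ∈ Ω, (P s n * Real.log (m n) - P s n * Real.log (P s n)
        - P s n * Real.log (B s))
        = (∑ n ∈ Ω, P s n * Real.log (Real.sqrt (P s n) * g n / (P s n * B s)))
          + ∑ n ∈ Ω, P s n * Real.log (m n / (Real.sqrt (P s n) * g n)) := by
      intro s
      rw [← Finset.sum_add_distrib]
      exact Finset.sum_congr rfl fun n hn => pointwise s n hn
    have eB : (∑ s, p s * ∑ n ∈ Ω, P s n * Real.log (m n / (Real.sqrt (P s n) * g n)))
        = ∑ sn ∈ Finset.univ ×ˢ Ω, (p sn.1 * P sn.1 sn.2)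
            * Real.log (m sn.2 / (Real.sqrt (P sn.1 sn.2) * g sn.2)) := by
      rw [Finset.sum_product]
      refine Finset.sum_congr rfl fun s _ => ?_
      rw [Finset.mul_sum]
      exact Finset.sum_congr rfl fun n _ => by ring
    calc ∑ s, p s * ∑ n ∈ Ω, (P s n * Real.log (m n) - P s n * Real.log (P s n)
            - P s n * Real.log (B s))
        = (∑ s, p s * ∑ n ∈ Ω, P s n * Real.log (Real.sqrt (P s n) * g n / (P s n * B s)))
          + ∑ s, p s * ∑ n ∈ Ω, P s n * Real.log (m n / (Real.sqrt (P s n) * g n)) := by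
          rw [← Finset.sum_add_distrib]
          refine Finset.sum_congr rfl fun s _ => ?_
          rw [e s]; ring
      _ ≤ 0 + 0 := by
          apply add_le_add
          · apply Finset.sum_nonpos
            intro s _
            have := mul_le_mul_of_nonneg_left (partA s) (hp_pos s).le
            simpa using this
          · rw [eB]; exact partB
      _ = 0 := by ring
  -- assemble
  have hEB : (∑ s, p s * Real.log (∑ r, p r *
      (∑ d ∈ Finset.range (D + 1), Real.sqrt (q s d * q r d) *
        (∑ k, Real.sqrt (z s k * z r k)) ^ d)))
      = ∑ s, p s * Real.log (B s) := by
    refine Finset.sum_congr rfl fun s _ => ?_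
    rw [hBs s]
    congr 1
    exact congrArg Real.log (Finset.sum_congr rfl fun r _ => by rw [← hBC s r])
  rw [ge_iff_le, hEB]
  simp only [hH]
  have hmm : ∑ n ∈ Ω, m n * Real.log (m n) = ∑ s, p s * ∑ n ∈ Ω, P s n * Real.log (m n) := by
    calc ∑ n ∈ Ω, m n * Real.log (m n)
        = ∑ n ∈ Ω, ∑ s, p s * (P s n * Real.log (m n)) := by
          refine Finset.sum_congr rfl fun n _ => ?_
          rw [hm n, Finset.sum_mul]
          exact Finset.sum_congr rfl fun s _ => by ring
      _ = ∑ s, p s * ∑ n ∈ Ω, P s n * Real.log (m n) := by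
          rw [Finset.sum_comm]
          exact Finset.sum_congr rfl fun s _ => by rw [Finset.mul_sum]
  have hlogB : ∀ s, ∑ n ∈ Ω, P s n * Real.log (B s) = Real.log (B s) := by
    intro s; rw [← Finset.sum_mul, hPsum s, one_mul]
  have expand : ∑ s, p s * ∑ n ∈ Ω,
      (P s n * Real.log (m n) - P s n * Real.log (P s n) - P s n * Real.log (B s))
      = (∑ s, p s * ∑ n ∈ Ω, P s n * Real.log (m n))
        - (∑ s, p s * ∑ n ∈ Ω, P s n * Real.log (P s n))
        - ∑ s, p s * Real.log (B s) := by
    rw [← Finset.sum_sub_distrib, ← Finset.sum_sub_distrib]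
    refine Finset.sum_congr rfl fun s _ => ?_
    rw [Finset.sum_sub_distrib, Finset.sum_sub_distrib, hlogB s]
    ring
  have hneg : ∑ s, p s * -(∑ n ∈ Ω, P s n * Real.log (P s n))
      = -∑ s, p s * ∑ n ∈ Ω, P s n * Real.log (P s n) := by
    simp [mul_neg]
  rw [expand] at key
  rw [hmm, hneg]
  linarith [key]
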